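/- Let Λ be a finite alphabet and let X ⊆ Λ^ℕ be a subshift. Then the following are equivalent: (i) the spectral partial action associated to X is topologically free; (ii) for every finite list of finite words β₁, β₂, …, β_n and for every circuit γ such that γ^∞ ∈ ⋂_{i=1}^n F_{β_i}, the set ⋂_{i=1}^n F_{β_i} contains some element other than γ^∞. -/

import Mathlib

open scoped Classical

namespace SubshiftPaper

variable {Λ : Type}

/-- The left shift on infinite words. -/
def shiftMap (x : ℕ → Λ) : ℕ → Λ := fun n => x (n + 1)

/-- Concatenation of a finite word with an infinite word. -/
def cat (α : List Λ) (y : ℕ → Λ) : ℕ → Λ := fun n => α.getD n (y (n - α.length))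

/-- `α` is a prefix of the infinite word `x`. -/
def Pref (α : List Λ) (x : ℕ → Λ) : Prop := ∀ (i : ℕ) (h : i < α.length), x i = α[i]

/-- The tail of `x` after `n` letters. -/
def tail (x : ℕ → Λ) (n : ℕ) : ℕ → Λ := fun i => x (n + i)

/-- `α` occurs in `x` at position `n`. -/
def OccursAt (α : List Λ) (x : ℕ → Λ) (n : ℕ) : Prop :=
  ∀ (i : ℕ) (h : i < α.length), x (n + i) = α[i]

/-- `α` occurs in `x` (as a contiguous block of letters). -/
def Occurs (α : List Λ) (x : ℕ → Λ) : Prop := ∃ n, OccursAt α x n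

/-- `X` is a subshift: a nonempty closed shift-invariant subset. -/
def IsSubshift [TopologicalSpace Λ] (X : Set (ℕ → Λ)) : Prop :=
  X.Nonempty ∧ IsClosed X ∧ ∀ x ∈ X, shiftMap x ∈ X

/-- The set of infinite words avoiding all words in `F`. -/
def ForbidSpace (F : Set (List Λ)) : Set (ℕ → Λ) := {x | ∀ α ∈ F, ¬ Occurs α x}

/-- `X` is a subshift of finite type. -/
def IsSFT (X : Set (ℕ → Λ)) : Prop := ∃ F : Set (List Λ), F.Finite ∧ X = ForbidSpace F

/-- The follower set of a finite word. -/
def follower (X : Set (ℕ → Λ)) (α : List Λ) : Set (ℕ → Λ) := {y | y ∈ X ∧ cat α y ∈ X}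

/-- The cylinder of a finite word. -/
def cylinder (X : Set (ℕ → Λ)) (α : List Λ) : Set (ℕ → Λ) := {x | x ∈ X ∧ Pref α x}

/-- The language of `X`. -/
def Language (X : Set (ℕ → Λ)) : Set (List Λ) := {α | ∃ x ∈ X, Occurs α x}

/-- The embedding of finite words into the free group. -/
def wd (α : List Λ) : FreeGroup Λ := (α.map FreeGroup.of).prod

/-- Indicator function of a set of group elements. -/
noncomputable def chi (s : Set (FreeGroup Λ)) : FreeGroup Λ → Bool :=
  fun g => if g ∈ s then true else false

/-- The set `ξ_x ⊆ 𝔽`. -/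
def xiSet [DecidableEq Λ] (X : Set (ℕ → Λ)) (x : ℕ → Λ) : Set (FreeGroup Λ) :=
  {g | ∃ α β : List Λ, g = wd α * (wd β)⁻¹ ∧
        FreeGroup.norm g = α.length + β.length ∧
        Pref α x ∧ tail x α.length ∈ follower X α ∩ follower X β}

/-- `ξ_x` as an element of `2^𝔽`. -/
noncomputable def xiB [DecidableEq Λ] (X : Set (ℕ → Λ)) (x : ℕ → Λ) : FreeGroup Λ → Bool :=
  chi (xiSet X x)

/-- The spectrum `Ω_X`: the closure of `{ξ_x : x ∈ X}` in `2^𝔽`. -/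
noncomputable def Omega [DecidableEq Λ] (X : Set (ℕ → Λ)) : Set (FreeGroup Λ → Bool) :=
  closure ((fun x => xiB X x) '' X)

/-- Left translation of an element of `2^𝔽`. -/
def translate (g : FreeGroup Λ) (ξ : FreeGroup Λ → Bool) : FreeGroup Λ → Bool :=
  fun h => ξ (g⁻¹ * h)

/-- `x` is the stem of `ξ`: `ξ ∩ 𝔽₊` is exactly the set of prefixes of `x`. -/
def IsStem (ξ : FreeGroup Λ → Bool) (x : ℕ → Λ) : Prop :=
  {g | ξ g = true} ∩ {g | ∃ α : List Λ, g = wd α} =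
    {g | ∃ α : List Λ, g = wd α ∧ Pref α x}

/-- `x` is the stem of `ξ` at `g`: `ξ ∩ g𝔽₊ = {gα : α is a prefix of x}`. -/
def IsStemAt (ξ : FreeGroup Λ → Bool) (g : FreeGroup Λ) (x : ℕ → Λ) : Prop :=
  {h | ξ h = true} ∩ {h | ∃ α : List Λ, h = g * wd α} =
    {h | ∃ α : List Λ, h = g * wd α ∧ Pref α x}

/-- The orbit of `ξ` under the spectral partial action. -/
def Orbit (ξ : FreeGroup Λ → Bool) : Set (FreeGroup Λ → Bool) :=
  {η | ∃ g : FreeGroup Λ, ξ g⁻¹ = true ∧ η = translate g ξ}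

/-- Topological freeness of the spectral partial action. -/
noncomputable def TopFree [DecidableEq Λ] (X : Set (ℕ → Λ)) : Prop :=
  ∀ g : FreeGroup Λ, g ≠ 1 →
    ∀ U : Set (FreeGroup Λ → Bool), IsOpen U →
      (U ∩ Omega X ⊆ {ξ | ξ g⁻¹ = true ∧ translate g ξ = ξ}) → U ∩ Omega X = ∅

/-- The periodic infinite word `γ^∞`. -/
noncomputable def perInf [Nonempty Λ] (γ : List Λ) : ℕ → Λ :=
  fun n => γ.getD (n % γ.length) (Classical.arbitrary Λ)

/-- `n`-fold concatenation of a finite word with itself. -/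
def rep : ℕ → List Λ → List Λ
  | 0, _ => []
  | n + 1, γ => γ ++ rep n γ

/-- `γ` is a circuit relative to `X`. -/
noncomputable def IsCircuit [Nonempty Λ] (X : Set (ℕ → Λ)) (γ : List Λ) : Prop :=
  γ ≠ [] ∧ perInf γ ∈ X

/-- `y` is an exit for the circuit `γ`. -/
noncomputable def IsExit [Nonempty Λ] (X : Set (ℕ → Λ)) (γ : List Λ) (y : ℕ → Λ) : Prop :=
  y ≠ perInf γ ∧ cat γ y ∈ X

/-- `z` is a strong exit for the circuit `γ`. -/
noncomputable def IsStrongExit [Nonempty Λ] (X : Set (ℕ → Λ)) (γ : List Λ) (z : ℕ → Λ) : Prop :=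
  z ≠ perInf γ ∧ ∀ n : ℕ, cat (rep n γ) z ∈ X

/-- The sets `X_g` of the standard partial action. -/
def Xg [DecidableEq Λ] (X : Set (ℕ → Λ)) (g : FreeGroup Λ) : Set (ℕ → Λ) :=
  {x | ∃ α β : List Λ, g = wd α * (wd β)⁻¹ ∧
        FreeGroup.norm g = α.length + β.length ∧
        ∃ y ∈ follower X α ∩ follower X β, x = cat α y}

/-- `x` is a fixed point for `θ_g`. -/
def IsThetaFixed [DecidableEq Λ] (X : Set (ℕ → Λ)) (g : FreeGroup Λ) (x : ℕ → Λ) : Prop :=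
  ∃ α β : List Λ, g = wd α * (wd β)⁻¹ ∧
    FreeGroup.norm g = α.length + β.length ∧
    ∃ y ∈ follower X α ∩ follower X β, x = cat β y ∧ cat α y = x

/-- `x` may be collectively reached from the finite set `B`. -/
def CollReached (X : Set (ℕ → Λ)) (B : Finset (List Λ)) (x : ℕ → Λ) : Prop :=
  ∃ α γ : List Λ, Pref α x ∧ ∀ β ∈ B, cat (β ++ γ) (tail x α.length) ∈ X

/-- `X` is collectively cofinal. -/
def CollCofinal (X : Set (ℕ → Λ)) : Prop :=
  ∀ B : Finset (List Λ), ↑B ⊆ Language X → (⋂ β ∈ B, follower X β).Nonempty →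
    ∀ x ∈ X, CollReached X B x

/-- `X` is strongly cofinal. -/
def StrongCofinal (X : Set (ℕ → Λ)) : Prop :=
  ∀ β ∈ Language X, ∃ M : ℕ, ∀ x ∈ X, ∃ α γ : List Λ, Pref α x ∧
    cat (β ++ γ) (tail x α.length) ∈ X ∧ α.length + γ.length ≤ M

/-- The even shift. -/
def evenShift : Set (ℕ → Fin 2) :=
  ForbidSpace {w | ∃ n : ℕ, w = 0 :: (List.replicate (2 * n + 1) 1 ++ [0])}

-- ===== auxiliary development =====

variable {Λ : Type}

lemma cat_lt (α : List Λ) (y : ℕ → Λ) {n : ℕ} (h : n < α.length) : cat α y n = α[n] :=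
  List.getD_eq_getElem α _ h

lemma cat_ge (α : List Λ) (y : ℕ → Λ) {n : ℕ} (h : α.length ≤ n) :
    cat α y n = y (n - α.length) := by
  unfold cat; rw [List.getD_eq_default α _ h]

lemma cat_nil (y : ℕ → Λ) : cat [] y = y := funext fun n => by simp [cat]

lemma cat_append (α β : List Λ) (y : ℕ → Λ) : cat (α ++ β) y = cat α (cat β y) := by
  funext n
  rcases lt_or_ge n α.length with h | h
  · rw [cat_lt _ _ (by simp only [List.length_append]; omega), cat_lt _ _ h,
      List.getElem_append_left]
  · rw [cat_ge α _ h]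
    rcases lt_or_ge n (α.length + β.length) with h2 | h2
    · rw [cat_lt _ _ (by simp only [List.length_append]; omega),
        cat_lt _ _ (by omega), List.getElem_append_right (by omega)]
    · rw [cat_ge _ _ (by simp only [List.length_append]; omega),
        cat_ge _ _ (by omega)]
      congr 1
      simp only [List.length_append]
      omega

lemma tail_zero (x : ℕ → Λ) : tail x 0 = x := funext fun n => by simp [tail]

lemma tail_tail (x : ℕ → Λ) (m n : ℕ) : tail (tail x m) n = tail x (m + n) := by
  funext i; simp only [tail]; congr 1; omega

lemma tail_cat (α : List Λ) (y : ℕ → Λ) : tail (cat α y) α.length = y := by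
  funext i
  simp only [tail]
  rw [cat_ge _ _ (by omega)]
  congr 1; omega

lemma pref_cat (α : List Λ) (y : ℕ → Λ) : Pref α (cat α y) := fun i h => cat_lt α y h

lemma cat_pref {α : List Λ} {x : ℕ → Λ} (h : Pref α x) : cat α (tail x α.length) = x := by
  funext n
  rcases lt_or_ge n α.length with h1 | h1
  · rw [cat_lt _ _ h1]; exact (h n h1).symm
  · rw [cat_ge _ _ h1]; simp only [tail]; congr 1; omega

/-- the length-`n` prefix word of `x` -/
def wrd (x : ℕ → Λ) (n : ℕ) : List Λ := (List.range n).map x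

@[simp] lemma wrd_length (x : ℕ → Λ) (n : ℕ) : (wrd x n).length = n := by simp [wrd]

lemma wrd_getElem (x : ℕ → Λ) {n i : ℕ} (h : i < (wrd x n).length) : (wrd x n)[i] = x i := by
  simp [wrd]

lemma pref_wrd (x : ℕ → Λ) (n : ℕ) : Pref (wrd x n) x := fun i h => (wrd_getElem x h).symm

lemma pref_eq_wrd {α : List Λ} {x : ℕ → Λ} (h : Pref α x) : α = wrd x α.length := by
  apply List.ext_getElem (by simp)
  intro i h1 h2
  rw [wrd_getElem x h2]
  exact (h i h1).symm

lemma cat_wrd (x : ℕ → Λ) (n : ℕ) : cat (wrd x n) (tail x n) = x := by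
  have := cat_pref (pref_wrd x n)
  rwa [wrd_length] at this

lemma pref_prefix {α β : List Λ} {x : ℕ → Λ} (hα : Pref α x) (hβ : Pref β x)
    (h : α.length ≤ β.length) : β = α ++ β.drop α.length := by
  nth_rewrite 1 [← List.take_append_drop α.length β]
  congr 1
  apply List.ext_getElem (by simp; omega)
  intro i h1 h2
  rw [List.getElem_take]
  rw [← hα i h2, hβ i (by omega)]

lemma pref_of_agree {α : List Λ} {x x' : ℕ → Λ} (h : Pref α x) {n : ℕ}
    (hn : α.length ≤ n) (hag : ∀ i < n, x' i = x i) : Pref α x' := by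
  intro i hi
  rw [hag i (by omega)]
  exact h i hi

lemma pref_append {α δ : List Λ} {x : ℕ → Λ} :
    Pref (α ++ δ) x ↔ Pref α x ∧ Pref δ (tail x α.length) := by
  constructor
  · intro h
    constructor
    · intro i hi
      have := h i (by simp; omega)
      rwa [List.getElem_append_left] at this
    · intro i hi
      have := h (α.length + i) (by simp; omega)
      rw [List.getElem_append_right (by omega)] at this
      simp only [Nat.add_sub_cancel_left] at this
      exact this
  · rintro ⟨h1, h2⟩ i hi
    simp only [List.length_append] at hi
    rcases lt_or_ge i α.length with h3 | h3
    · rw [List.getElem_append_left h3]; exact h1 i h3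
    · rw [List.getElem_append_right (by omega)]
      have := h2 (i - α.length) (by omega)
      simp only [tail] at this
      rw [← this]
      congr 1; omega

lemma tail_eq_cat_drop {β : List Λ} {x : ℕ → Λ} (hβ : Pref β x) {m : ℕ} (hm : m ≤ β.length) :
    tail x m = cat (β.drop m) (tail x β.length) := by
  funext i
  simp only [tail]
  rcases lt_or_ge i (β.length - m) with h1 | h1
  · rw [cat_lt _ _ (by simp; omega), List.getElem_drop]
    exact hβ (m + i) (by omega)
  · rw [cat_ge _ _ (by simp; omega)]
    simp only [tail, List.length_drop]
    congr 1; omega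
variable {Λ : Type}

lemma tail_mem {X : Set (ℕ → Λ)} [TopologicalSpace Λ] (hX : IsSubshift X) {x : ℕ → Λ}
    (hx : x ∈ X) (n : ℕ) : tail x n ∈ X := by
  induction n with
  | zero => rwa [tail_zero]
  | succ n ih =>
    have : tail x (n + 1) = shiftMap (tail x n) := by
      funext i; simp only [tail, shiftMap]; congr 1; omega
    rw [this]
    exact hX.2.2 _ ih

section PerInf
variable [Nonempty Λ]

lemma tail_perInf (γ : List Λ) : tail (perInf γ) γ.length = perInf γ := by
  funext i
  simp only [tail, perInf]
  congr 1
  exact Nat.add_mod_left _ _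

lemma tail_perInf_mul (γ : List Λ) (N : ℕ) : tail (perInf γ) (N * γ.length) = perInf γ := by
  induction N with
  | zero => simp [tail_zero]
  | succ N ih =>
    have : (N + 1) * γ.length = γ.length + N * γ.length := by ring
    rw [this, ← tail_tail, tail_perInf, ih]

lemma cat_perInf (γ : List Λ) : cat γ (perInf γ) = perInf γ := by
  rcases eq_or_ne γ [] with rfl | hγ
  · rw [cat_nil]
  have hlen : 0 < γ.length := List.length_pos_iff.2 hγ
  funext n
  rcases lt_or_ge n γ.length with h | h
  · rw [cat_lt _ _ h]
    simp only [perInf]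
    rw [Nat.mod_eq_of_lt h, List.getD_eq_getElem _ _ h]
  · rw [cat_ge _ _ h]
    simp only [perInf]
    congr 1
    conv_rhs => rw [Nat.mod_eq_sub_mod h]

lemma pref_perInf (γ : List Λ) : Pref γ (perInf γ) := by
  have := pref_cat γ (perInf γ)
  rwa [cat_perInf] at this

@[simp] lemma rep_length (n : ℕ) (γ : List Λ) : (rep n γ).length = n * γ.length := by
  induction n with
  | zero => simp [rep]
  | succ n ih => simp [rep, ih]; ring

lemma cat_rep_perInf (γ : List Λ) (n : ℕ) : cat (rep n γ) (perInf γ) = perInf γ := by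
  induction n with
  | zero => simp [rep, cat_nil]
  | succ n ih => rw [rep, cat_append, ih, cat_perInf]

lemma eq_perInf {y : ℕ → Λ} {ρ : List Λ} (hρ : ρ ≠ [])
    (hper : tail y ρ.length = y) (hpref : Pref ρ y) : y = perInf ρ := by
  have hlen : 0 < ρ.length := List.length_pos_iff.2 hρ
  funext n
  induction n using Nat.strong_induction_on with
  | _ n ih =>
    rcases lt_or_ge n ρ.length with h | h
    · rw [hpref n h]
      simp only [perInf]
      rw [Nat.mod_eq_of_lt h, List.getD_eq_getElem _ _ h]
    · have h1 : y n = y (n - ρ.length) := by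
        conv_rhs => rw [← hper]
        simp only [tail]
        congr 1; omega
      rw [h1, ih _ (by omega)]
      simp only [perInf]
      congr 1
      conv_rhs => rw [Nat.mod_eq_sub_mod h]

lemma pref_rep_perInf (γ : List Λ) (n : ℕ) : Pref (rep n γ) (perInf γ) := by
  have := pref_cat (rep n γ) (perInf γ)
  rwa [cat_rep_perInf] at this

end PerInf
variable {Λ : Type} [DecidableEq Λ]

lemma wd_nil : wd ([] : List Λ) = 1 := rfl

lemma wd_eq_mk (p : List Λ) : wd p = FreeGroup.mk (p.map (·, true)) := by
  induction p with
  | nil => exact FreeGroup.one_eq_mk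
  | cons a p ih =>
    show FreeGroup.of a * wd p = _
    rw [ih, show FreeGroup.of a = FreeGroup.mk [(a, true)] from rfl, FreeGroup.mul_mk]
    rfl

lemma wd_append (p q : List Λ) : wd (p ++ q) = wd p * wd q := by
  simp only [wd_eq_mk, List.map_append, FreeGroup.mul_mk]

/-- The positive-negative word associated to a pair of positive words. -/
def pn (p q : List Λ) : List (Λ × Bool) :=
  p.map (·, true) ++ (q.map (·, false)).reverse

@[simp] lemma pn_length (p q : List Λ) : (pn p q).length = p.length + q.length := by simp [pn]

lemma wd_pair (p q : List Λ) : wd p * (wd q)⁻¹ = FreeGroup.mk (pn p q) := by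
  rw [wd_eq_mk, wd_eq_mk, FreeGroup.inv_mk, FreeGroup.mul_mk]
  congr 1
  show _ = _ ++ _
  congr 1
  show FreeGroup.invRev _ = _
  unfold FreeGroup.invRev
  congr 1
  rw [List.map_map]
  rfl

/-- No cancellation between `p` and `q⁻¹`. -/
def NoCancel (p q : List Λ) : Prop := ∀ a, p.getLast? = some a → q.getLast? ≠ some a

lemma chain'_triv {β : Type*} {R : β → β → Prop} (h : ∀ a b, R a b) (l : List β) :
    List.Chain' R l := by
  induction l with
  | nil => exact List.isChain_nil
  | cons a l ih =>
    cases l with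
    | nil => exact List.isChain_singleton a
    | cons b l => exact List.isChain_cons_cons.2 ⟨h a b, ih⟩

lemma reduce_eq_self {L : List (Λ × Bool)}
    (h : List.Chain' (fun a b => ¬(a.1 = b.1 ∧ a.2 = !b.2)) L) : FreeGroup.reduce L = L := by
  induction L with
  | nil => rfl
  | cons x L ih =>
    rw [FreeGroup.reduce.cons, ih h.tail]
    cases L with
    | nil => rfl
    | cons hd tl =>
      have hx : ¬(x.1 = hd.1 ∧ x.2 = !hd.2) := (List.isChain_cons_cons.1 h).1
      show (if x.1 = hd.1 ∧ x.2 = !hd.2 then tl else x :: hd :: tl) = x :: hd :: tl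
      rw [if_neg hx]

lemma chain'_pn {p q : List Λ} (h : NoCancel p q) :
    List.Chain' (fun a b : Λ × Bool => ¬(a.1 = b.1 ∧ a.2 = !b.2)) (pn p q) := by
  apply List.IsChain.append
  · apply (List.isChain_map _).2
    apply chain'_triv
    intro a b
    simp
  · apply List.isChain_reverse.2
    apply (List.isChain_map _).2
    apply chain'_triv
    intro a b
    simp [flip]
  · intro x hx y hy
    rw [List.getLast?_map, Option.mem_def, Option.map_eq_some_iff] at hx
    rw [List.head?_reverse, List.getLast?_map, Option.mem_def, Option.map_eq_some_iff] at hy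
    obtain ⟨a, ha, rfl⟩ := hx
    obtain ⟨b, hb, rfl⟩ := hy
    rintro ⟨hab, -⟩
    exact h a ha (by rw [hb]; simp only at hab; rw [hab])

lemma toWord_pair {p q : List Λ} (h : NoCancel p q) :
    (wd p * (wd q)⁻¹).toWord = pn p q := by
  rw [wd_pair, FreeGroup.toWord_mk, reduce_eq_self (chain'_pn h)]

lemma norm_pair {p q : List Λ} (h : NoCancel p q) :
    FreeGroup.norm (wd p * (wd q)⁻¹) = p.length + q.length := by
  show (wd p * (wd q)⁻¹).toWord.length = _
  rw [toWord_pair h, pn_length]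

lemma norm_wd (p : List Λ) : FreeGroup.norm (wd p) = p.length := by
  have h : NoCancel p ([] : List Λ) := by intro a _ hq; simp at hq
  have := norm_pair h
  simpa [wd_nil] using this

lemma toWord_of_norm {p q : List Λ}
    (h : FreeGroup.norm (wd p * (wd q)⁻¹) = p.length + q.length) :
    (wd p * (wd q)⁻¹).toWord = pn p q := by
  rw [wd_pair] at h ⊢
  rw [FreeGroup.toWord_mk]
  have hsub : List.Sublist (FreeGroup.reduce (pn p q)) (pn p q) :=
    (FreeGroup.reduce.red (L := pn p q)).sublist
  apply hsub.eq_of_length_le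
  have : FreeGroup.norm (FreeGroup.mk (pn p q)) = (FreeGroup.reduce (pn p q)).length := by
    show (FreeGroup.mk (pn p q)).toWord.length = _
    rw [FreeGroup.toWord_mk]
  rw [this] at h
  rw [h, pn_length]

lemma pn_inj {a b p q : List Λ} (h : pn a b = pn p q) : a = p ∧ b = q := by
  induction a generalizing p with
  | nil =>
    cases p with
    | nil =>
      refine ⟨rfl, ?_⟩
      unfold pn at h
      simp only [List.map_nil, List.nil_append] at h
      have := List.reverse_injective h
      exact List.map_injective_iff.2 (fun x y hxy => by
        simpa using congrArg Prod.fst hxy) this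
    | cons z p' =>
      exfalso
      unfold pn at h
      simp only [List.map_nil, List.nil_append, List.map_cons] at h
      have : (z, true) ∈ (b.map (·, false)).reverse := by rw [h]; simp
      rw [List.mem_reverse] at this
      rcases List.mem_map.1 this with ⟨c, _, hc⟩
      simpa using congrArg Prod.snd hc
  | cons x a' ih =>
    cases p with
    | nil =>
      exfalso
      unfold pn at h
      simp only [List.map_nil, List.nil_append, List.map_cons] at h
      have : (x, true) ∈ (q.map (·, false)).reverse := by rw [← h]; simp
      rw [List.mem_reverse] at this
      rcases List.mem_map.1 this with ⟨c, _, hc⟩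
      simpa using congrArg Prod.snd hc
    | cons z p' =>
      unfold pn at h
      simp only [List.map_cons, List.cons_append, List.cons.injEq, Prod.mk.injEq] at h
      obtain ⟨⟨h1, -⟩, h2⟩ := h
      obtain ⟨h3, h4⟩ := ih (p := p') h2
      exact ⟨by rw [h1, h3], h4⟩

lemma decomp_unique {g : FreeGroup Λ} {a b p q : List Λ}
    (h1 : g = wd a * (wd b)⁻¹) (n1 : FreeGroup.norm g = a.length + b.length)
    (h2 : g = wd p * (wd q)⁻¹) (n2 : FreeGroup.norm g = p.length + q.length) :
    a = p ∧ b = q := by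
  apply pn_inj
  rw [← toWord_of_norm (p := a) (q := b) (by rw [← h1]; exact n1),
    ← toWord_of_norm (p := p) (q := q) (by rw [← h2]; exact n2), ← h1, ← h2]

variable {Λ : Type} [DecidableEq Λ] [TopologicalSpace Λ]

lemma chi_eq_true {s : Set (FreeGroup Λ)} {g : FreeGroup Λ} : chi s g = true ↔ g ∈ s := by
  simp [chi]

lemma xiB_eq_true {X : Set (ℕ → Λ)} {x : ℕ → Λ} {g : FreeGroup Λ} :
    xiB X x g = true ↔ g ∈ xiSet X x := chi_eq_true

lemma mem_xiSet_of_nocancel {X : Set (ℕ → Λ)} (hX : IsSubshift X) {x : ℕ → Λ} (hx : x ∈ X)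
    {h : FreeGroup Λ} {p q : List Λ} (hw : h = wd p * (wd q)⁻¹) (hp : Pref p x)
    (hq : cat q (tail x p.length) ∈ X) (hnc : NoCancel p q) : h ∈ xiSet X x := by
  refine ⟨p, q, hw, by rw [hw]; exact norm_pair hnc, hp, ?_, ?_⟩
  · exact ⟨tail_mem hX hx _, by rw [cat_pref hp]; exact hx⟩
  · exact ⟨tail_mem hX hx _, hq⟩

lemma mem_xiSet_of_witness {X : Set (ℕ → Λ)} (hX : IsSubshift X) {x : ℕ → Λ} (hx : x ∈ X)
    {h : FreeGroup Λ} {p q : List Λ} (hw : h = wd p * (wd q)⁻¹) (hp : Pref p x)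
    (hq : cat q (tail x p.length) ∈ X) : h ∈ xiSet X x := by
  suffices key : ∀ (n : ℕ) (h : FreeGroup Λ) (p q : List Λ), q.length ≤ n →
      h = wd p * (wd q)⁻¹ → Pref p x → cat q (tail x p.length) ∈ X → h ∈ xiSet X x by
    exact key q.length h p q le_rfl hw hp hq
  intro n
  induction n with
  | zero =>
    intro h p q hlen hw hp hq
    have hq0 : q = [] := List.eq_nil_of_length_eq_zero (by omega)
    apply mem_xiSet_of_nocancel hX hx hw hp hq
    intro a _ hqa
    rw [hq0] at hqa
    simp at hqa
  | succ n ih =>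
    intro h p q hlen hw hp hq
    by_cases hnc : NoCancel p q
    · exact mem_xiSet_of_nocancel hX hx hw hp hq hnc
    · simp only [NoCancel, not_forall, not_not] at hnc
      obtain ⟨a, hpa, hqa⟩ := hnc
      obtain ⟨p', hpd⟩ := List.getLast?_eq_some_iff.mp hpa
      obtain ⟨q', hqd⟩ := List.getLast?_eq_some_iff.mp hqa
      subst hpd
      subst hqd
      have hw' : h = wd p' * (wd q')⁻¹ := by
        rw [hw, wd_append, wd_append]
        group
      have hp'2 : Pref p' x := (pref_append.1 hp).1
      have htl : tail x p'.length = cat [a] (tail x (p' ++ [a]).length) := by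
        have := tail_eq_cat_drop (β := p' ++ [a]) (x := x) hp (m := p'.length)
          (by simp)
        rw [this, List.drop_left]
      have hq'2 : cat q' (tail x p'.length) ∈ X := by
        rw [htl, ← cat_append]
        exact hq
      exact ih h p' q' (by simp at hlen ⊢; omega) hw' hp'2 hq'2

lemma wd_mem_xiSet_iff {X : Set (ℕ → Λ)} (hX : IsSubshift X) {x : ℕ → Λ} (hx : x ∈ X)
    (q : List Λ) : wd q ∈ xiSet X x ↔ Pref q x := by
  constructor
  · rintro ⟨a, b, hab, hn, hpa, -⟩
    have h2 : wd q = wd q * (wd ([] : List Λ))⁻¹ := by rw [wd_nil]; group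
    have n2 : FreeGroup.norm (wd q) = q.length + ([] : List Λ).length := by
      simpa using norm_wd q
    obtain ⟨rfl, -⟩ := decomp_unique hab hn h2 n2
    exact hpa
  · intro hq
    apply mem_xiSet_of_witness hX hx (p := q) (q := ([] : List Λ))
      (by rw [wd_nil]; group) hq
    rw [cat_nil]
    exact tail_mem hX hx _

lemma xi_push {X : Set (ℕ → Λ)} (hX : IsSubshift X) {x : ℕ → Λ} (hx : x ∈ X) {α β : List Λ}
    (hα : Pref α x) (hβ : Pref β x) (ht : tail x α.length = tail x β.length) {h : FreeGroup Λ}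
    (hh : h ∈ xiSet X x) : (wd α * (wd β)⁻¹) * h ∈ xiSet X x := by
  obtain ⟨a, b, hab, hn, hpa, ⟨-, hcata⟩, ⟨-, hcatb⟩⟩ := hh
  rcases le_or_gt β.length a.length with hc | hc
  · have ha2 : a = β ++ a.drop β.length := pref_prefix hβ hpa hc
    set a₂ := a.drop β.length with ha₂
    have hlen : a.length = β.length + a₂.length := by
      conv_lhs => rw [ha2]
      simp
    have hw : (wd α * (wd β)⁻¹) * h = wd (α ++ a₂) * (wd b)⁻¹ := by
      rw [hab]
      conv_lhs => rw [ha2]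
      rw [wd_append, wd_append]
      group
    apply mem_xiSet_of_witness hX hx hw
    · apply pref_append.2
      refine ⟨hα, ?_⟩
      rw [ht]
      exact (pref_append.1 (ha2 ▸ hpa)).2
    · have hlen2 : (α ++ a₂).length = α.length + a₂.length := by simp
      rw [hlen2, ← tail_tail, ht, tail_tail, ← hlen]
      exact hcatb
  · have hb2 : β = a ++ β.drop a.length := pref_prefix hpa hβ (le_of_lt hc)
    set s := β.drop a.length with hs
    have hw : (wd α * (wd β)⁻¹) * h = wd α * (wd (b ++ s))⁻¹ := by
      rw [hab]
      conv_lhs => rw [hb2]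
      rw [wd_append, wd_append]
      group
    apply mem_xiSet_of_witness hX hx hw hα
    rw [ht, cat_append]
    rw [← tail_eq_cat_drop hβ (le_of_lt hc)]
    exact hcatb

lemma translate_apply (g : FreeGroup Λ) (ξ : FreeGroup Λ → Bool) (h : FreeGroup Λ) :
    translate g ξ h = ξ (g⁻¹ * h) := rfl

lemma fixed_of_sym {X : Set (ℕ → Λ)} (hX : IsSubshift X) {x : ℕ → Λ} (hx : x ∈ X)
    {α β : List Λ} (hα : Pref α x) (hβ : Pref β x)
    (ht : tail x α.length = tail x β.length) {g : FreeGroup Λ}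
    (hg : g⁻¹ = wd α * (wd β)⁻¹) :
    xiB X x g⁻¹ = true ∧ translate g (xiB X x) = xiB X x := by
  constructor
  · apply xiB_eq_true.2
    apply mem_xiSet_of_witness hX hx hg hα
    rw [ht, cat_pref hβ]
    exact hx
  · funext h
    show xiB X x (g⁻¹ * h) = xiB X x h
    have hiff : g⁻¹ * h ∈ xiSet X x ↔ h ∈ xiSet X x := by
      constructor
      · intro hm
        have := xi_push hX hx hβ hα ht.symm hm
        have he : (wd β * (wd α)⁻¹) * (g⁻¹ * h) = h := by
          have : wd β * (wd α)⁻¹ = g := by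
            rw [← inv_inv g, hg]
            group
          rw [this]
          group
        rwa [he] at this
      · intro hm
        have := xi_push hX hx hα hβ ht hm
        rwa [← hg] at this
    show chi _ _ = chi _ _
    unfold chi
    exact if_congr hiff rfl rfl

lemma fixed_point_structure [Nonempty Λ] {X : Set (ℕ → Λ)} (hX : IsSubshift X) {x : ℕ → Λ}
    (hx : x ∈ X) {g : FreeGroup Λ} (hg1 : g ≠ 1)
    (h1 : xiB X x g⁻¹ = true) (h2 : translate g (xiB X x) = xiB X x) :
    ∃ α β ρ : List Λ, g⁻¹ = wd α * (wd β)⁻¹ ∧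
      FreeGroup.norm g⁻¹ = α.length + β.length ∧ ρ ≠ [] ∧
      (β = α ++ ρ ∨ α = β ++ ρ) ∧ Pref α x ∧ Pref β x ∧
      tail x α.length = perInf ρ ∧ tail x β.length = perInf ρ := by
  obtain ⟨α, β, hab, hn, hpα, ⟨-, -⟩, ⟨-, -⟩⟩ := xiB_eq_true.1 h1
  set y := tail x α.length with hy
  have step : ∀ n : ℕ, Pref (β ++ wrd y n) x := by
    intro n
    have e1 : wd (α ++ wrd y n) ∈ xiSet X x := by
      apply (wd_mem_xiSet_iff hX hx _).2
      exact pref_append.2 ⟨hpα, pref_wrd y n⟩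
    have e2 := congrFun h2 (wd (β ++ wrd y n))
    rw [translate_apply] at e2
    have e3 : g⁻¹ * wd (β ++ wrd y n) = wd (α ++ wrd y n) := by
      rw [hab, wd_append, wd_append]
      group
    rw [e3] at e2
    have : wd (β ++ wrd y n) ∈ xiSet X x := by
      apply xiB_eq_true.1
      rw [← e2]
      exact xiB_eq_true.2 e1
    exact (wd_mem_xiSet_iff hX hx _).1 this
  have hpβ : Pref β x := by
    have := step 0
    simpa [wrd] using this
  have htβ : tail x β.length = y := by
    funext j
    have := step (j + 1)
    have h3 := this (β.length + j) (by simp only [List.length_append, wrd_length]; omega)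
    rw [List.getElem_append_right (by omega)] at h3
    rw [wrd_getElem] at h3
    show x (β.length + j) = y j
    rw [h3]
    congr 1
    omega
  have hne : α ≠ β := by
    intro e
    apply hg1
    rw [← inv_inv g, hab, e]
    group
  have hlne : α.length ≠ β.length := by
    intro e
    apply hne
    have h4 := pref_prefix hpα hpβ (le_of_eq e)
    have h5 : β.drop α.length = [] := by
      apply List.eq_nil_of_length_eq_zero
      simp [e]
    rw [h5, List.append_nil] at h4
    exact h4.symm
  rcases lt_or_gt_of_ne hlne with hc | hc
  · set ρ := β.drop α.length with hρdef
    have hβdec : β = α ++ ρ := pref_prefix hpα hpβ (le_of_lt hc)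
    have hρne : ρ ≠ [] := by
      apply List.ne_nil_of_length_pos
      simp [hρdef]; omega
    have hlen : β.length = α.length + ρ.length := by
      conv_lhs => rw [hβdec]; simp
    have hper : tail y ρ.length = y := by
      rw [hy, tail_tail, ← hlen, htβ]
    have hpρ : Pref ρ y := by
      rw [hy]
      exact (pref_append.1 (hβdec ▸ hpβ)).2
    have hyper : y = perInf ρ := eq_perInf hρne hper hpρ
    exact ⟨α, β, ρ, hab, hn, hρne, Or.inl hβdec, hpα, hpβ, hyper, htβ.trans hyper⟩
  · set ρ := α.drop β.length with hρdef
    have hαdec : α = β ++ ρ := pref_prefix hpβ hpα (le_of_lt hc)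
    have hρne : ρ ≠ [] := by
      apply List.ne_nil_of_length_pos
      simp [hρdef]; omega
    have hlen : α.length = β.length + ρ.length := by
      conv_lhs => rw [hαdec]; simp
    have hper : tail y ρ.length = y := by
      conv_lhs => rw [← htβ]
      rw [tail_tail, ← hlen, hy]
    have hpρ : Pref ρ y := by
      rw [← htβ]
      exact (pref_append.1 (hαdec ▸ hpα)).2
    have hyper : y = perInf ρ := eq_perInf hρne hper hpρ
    exact ⟨α, β, ρ, hab, hn, hρne, Or.inr hαdec, hpα, hpβ, hyper, htβ.trans hyper⟩

variable {Λ : Type}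

lemma pref_nil (x : ℕ → Λ) : Pref ([] : List Λ) x := fun i h => absurd h (by simp)

lemma exists_finset_nbhd {U : Set (FreeGroup Λ → Bool)} (hU : IsOpen U)
    {ξ : FreeGroup Λ → Bool} (hξ : ξ ∈ U) :
    ∃ G : Finset (FreeGroup Λ), ∀ η : FreeGroup Λ → Bool, (∀ h ∈ G, η h = ξ h) → η ∈ U := by
  rcases isOpen_pi_iff.1 hU ξ hξ with ⟨I, u, h1, h2⟩
  refine ⟨I, fun η hη => h2 ?_⟩
  intro i hi
  rw [hη i hi]
  exact (h1 i hi).2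

lemma not_mem_closed [TopologicalSpace Λ] {X : Set (ℕ → Λ)} (hX : IsClosed X) {w : ℕ → Λ}
    (hw : w ∉ X) : ∃ n, ∀ w' : ℕ → Λ, (∀ i < n, w' i = w i) → w' ∉ X := by
  rcases isOpen_pi_iff.1 hX.isOpen_compl w hw with ⟨I, u, h1, h2⟩
  refine ⟨I.sup id + 1, fun w' hw' => h2 ?_⟩
  intro i hi
  rw [hw' i (lt_of_le_of_lt (Finset.le_sup (f := id) hi) (Nat.lt_succ_self _))]
  exact (h1 i hi).2

lemma fix_closed (g : FreeGroup Λ) :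
    IsClosed {ξ : FreeGroup Λ → Bool | ξ g⁻¹ = true ∧ translate g ξ = ξ} := by
  have h1 : IsClosed {ξ : FreeGroup Λ → Bool | ξ g⁻¹ = true} := by
    have hc : Continuous fun ξ : FreeGroup Λ → Bool => ξ g⁻¹ := continuous_apply _
    exact IsClosed.preimage hc (isClosed_discrete {true})
  have h2 : IsClosed {ξ : FreeGroup Λ → Bool | translate g ξ = ξ} := by
    have he : {ξ : FreeGroup Λ → Bool | translate g ξ = ξ} =
        ⋂ h : FreeGroup Λ, {ξ | ξ (g⁻¹ * h) = ξ h} := by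
      ext ξ
      simp only [Set.mem_setOf_eq, Set.mem_iInter, funext_iff]
      exact Iff.rfl
    rw [he]
    exact isClosed_iInter fun h => isClosed_eq (continuous_apply _) (continuous_apply _)
  exact h1.inter h2

variable [DecidableEq Λ] [TopologicalSpace Λ]

lemma inv_wd_mem_elim {X : Set (ℕ → Λ)} {x : ℕ → Λ} {q : List Λ}
    (h : (wd q)⁻¹ ∈ xiSet X x) : cat q x ∈ X := by
  obtain ⟨a, b, hab, hn, hpa, htl⟩ := h
  have h2 : (wd q)⁻¹ = wd ([] : List Λ) * (wd q)⁻¹ := by rw [wd_nil]; group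
  have n2 : FreeGroup.norm ((wd q)⁻¹) = ([] : List Λ).length + q.length := by
    rw [FreeGroup.norm_inv_eq, norm_wd]
    simp
  obtain ⟨rfl, rfl⟩ := decomp_unique hab hn h2 n2
  have := htl.2.2
  simp only [List.length_nil] at this
  rwa [tail_zero] at this

lemma inv_wd_mem_intro {X : Set (ℕ → Λ)} (hX : IsSubshift X) {x : ℕ → Λ} (hx : x ∈ X)
    {q : List Λ} (h : cat q x ∈ X) : (wd q)⁻¹ ∈ xiSet X x := by
  apply mem_xiSet_of_witness hX hx (p := ([] : List Λ)) (q := q)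
    (by rw [wd_nil]; group) (pref_nil x)
  simp only [List.length_nil]
  rwa [tail_zero]

lemma xiB_mem_Omega {X : Set (ℕ → Λ)} {x : ℕ → Λ} (hx : x ∈ X) : xiB X x ∈ Omega X :=
  subset_closure (Set.mem_image_of_mem _ hx)

/-- The forward direction. -/
lemma forward_dir [Nonempty Λ] {X : Set (ℕ → Λ)} (hX : IsSubshift X) (TF : TopFree X) :
    ∀ (Bs : List (List Λ)) (γ : List Λ), γ ≠ [] → perInf γ ∈ X →
      (∀ β ∈ Bs, perInf γ ∈ follower X β) →
      ∃ z ∈ X, z ≠ perInf γ ∧ ∀ β ∈ Bs, z ∈ follower X β := by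
  intro Bs γ hγ hper hfol
  by_contra hcon
  push_neg at hcon
  set g := wd γ with hgdef
  have hg : g ≠ 1 := by
    intro e
    apply hγ
    have h1 := norm_wd γ
    rw [← hgdef, e, FreeGroup.norm_one] at h1
    exact List.length_eq_zero_iff.1 h1.symm
  set U := {ξ : FreeGroup Λ → Bool | ξ g⁻¹ = true ∧ ∀ β ∈ Bs, ξ ((wd β)⁻¹) = true} with hUdef
  have hUopen : IsOpen U := by
    have he : U = ((fun ξ : FreeGroup Λ → Bool => ξ g⁻¹) ⁻¹' {true}) ∩
        ⋂ β ∈ Bs.toFinset, ((fun ξ : FreeGroup Λ → Bool => ξ ((wd β)⁻¹)) ⁻¹' {true}) := by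
      ext ξ
      simp [hUdef, List.mem_toFinset]
    rw [he]
    exact IsOpen.inter ((continuous_apply _).isOpen_preimage _ (by trivial))
      (isOpen_biInter_finset fun β _ => (continuous_apply _).isOpen_preimage _ (by trivial))
  have himg : ∀ x ∈ X, xiB X x ∈ U → x = perInf γ := by
    intro x hx hxU
    obtain ⟨h1, h2⟩ := hxU
    have hFβ : ∀ β ∈ Bs, x ∈ follower X β := by
      intro β hβ
      exact ⟨hx, inv_wd_mem_elim (xiB_eq_true.1 (h2 β hβ))⟩
    by_contra hne
    obtain ⟨β, hβ, hnf⟩ := hcon x hx hne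
    exact hnf (hFβ β hβ)
  have hγfix : xiB X (perInf γ) g⁻¹ = true ∧
      translate g (xiB X (perInf γ)) = xiB X (perInf γ) := by
    apply fixed_of_sym hX hper (α := ([] : List Λ)) (β := γ) (pref_nil _) (pref_perInf γ)
    · simp only [List.length_nil]
      rw [tail_zero, tail_perInf]
    · rw [wd_nil, hgdef]; group
  have hfixsub : U ∩ Omega X ⊆ {ξ | ξ g⁻¹ = true ∧ translate g ξ = ξ} := by
    rintro ξ ⟨hξU, hξΩ⟩
    have h5 : ξ ∈ closure (U ∩ ((fun x => xiB X x) '' X)) :=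
      hUopen.inter_closure ⟨hξU, hξΩ⟩
    have h6 : U ∩ ((fun x => xiB X x) '' X) ⊆ {xiB X (perInf γ)} := by
      rintro η ⟨hηU, x, hx, rfl⟩
      simp only [Set.mem_singleton_iff]
      rw [himg x hx hηU]
    have h7 : ξ ∈ closure {xiB X (perInf γ)} := closure_mono h6 h5
    have h8 : ({xiB X (perInf γ)} : Set (FreeGroup Λ → Bool)) ⊆
        {ξ | ξ g⁻¹ = true ∧ translate g ξ = ξ} := by
      intro η hη
      rw [Set.mem_singleton_iff] at hη
      rw [hη]
      exact hγfix
    exact (IsClosed.closure_subset_iff (fix_closed g)).2 h8 h7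
  have hempty := TF g hg U hUopen hfixsub
  rw [Set.eq_empty_iff_forall_notMem] at hempty
  apply hempty (xiB X (perInf γ))
  refine ⟨⟨?_, ?_⟩, xiB_mem_Omega hper⟩
  · apply xiB_eq_true.2
    apply inv_wd_mem_intro hX hper
    rw [cat_perInf]
    exact hper
  · intro β hβ
    apply xiB_eq_true.2
    apply inv_wd_mem_intro hX hper
    exact (hfol β hβ).2

lemma key_false {X : Set (ℕ → Λ)} (hX : IsSubshift X) {x : ℕ → Λ} (hx : x ∈ X)
    (h : FreeGroup Λ) (hf : xiB X x h = false) :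
    ∃ n, ∀ x' ∈ X, (∀ i < n, x' i = x i) → xiB X x' h = false := by
  by_cases hd : ∃ a b : List Λ, h = wd a * (wd b)⁻¹ ∧
      FreeGroup.norm h = a.length + b.length
  · obtain ⟨a, b, hab, hn⟩ := hd
    by_cases hpa : Pref a x
    · have hnot : cat b (tail x a.length) ∉ X := by
        intro hmem
        have := xiB_eq_true.2 (mem_xiSet_of_witness hX hx hab hpa hmem)
        rw [this] at hf
        exact Bool.noConfusion hf
      obtain ⟨m, hm⟩ := not_mem_closed hX.2.1 hnot
      refine ⟨a.length + m, fun x' hx' hag => ?_⟩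
      cases hb : xiB X x' h with
      | false => rfl
      | true =>
        exfalso
        obtain ⟨a', b', hab', hn', hpa', ⟨-, -⟩, ⟨-, hcatb'⟩⟩ := xiB_eq_true.1 hb
        obtain ⟨rfl, rfl⟩ := decomp_unique hab' hn' hab hn
        apply hm (cat b' (tail x' a'.length)) ?_ hcatb'
        intro i hi
        rcases lt_or_ge i b'.length with h1 | h1
        · rw [cat_lt _ _ h1, cat_lt _ _ h1]
        · rw [cat_ge _ _ h1, cat_ge _ _ h1]
          show x' _ = x _
          apply hag
          omega
    · refine ⟨a.length, fun x' hx' hag => ?_⟩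
      cases hb : xiB X x' h with
      | false => rfl
      | true =>
        exfalso
        obtain ⟨a', b', hab', hn', hpa', -⟩ := xiB_eq_true.1 hb
        obtain ⟨rfl, rfl⟩ := decomp_unique hab' hn' hab hn
        apply hpa
        intro i hi
        rw [← hag i hi]
        exact hpa' i hi
  · refine ⟨0, fun x' hx' hag => ?_⟩
    cases hb : xiB X x' h with
    | false => rfl
    | true =>
      exfalso
      obtain ⟨a', b', hab', hn', -⟩ := xiB_eq_true.1 hb
      exact hd ⟨a', b', hab', hn'⟩

/-- The backward direction. -/
lemma backward_dir [Nonempty Λ] {X : Set (ℕ → Λ)} (hX : IsSubshift X)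
    (RHS : ∀ (Bs : List (List Λ)) (γ : List Λ), γ ≠ [] → perInf γ ∈ X →
      (∀ β ∈ Bs, perInf γ ∈ follower X β) →
      ∃ z ∈ X, z ≠ perInf γ ∧ ∀ β ∈ Bs, z ∈ follower X β) : TopFree X := by
  intro g hg U hUopen hUfix
  rw [Set.eq_empty_iff_forall_notMem]
  rintro ξ ⟨hξU, hξΩ⟩
  have hne : (U ∩ ((fun x => xiB X x) '' X)).Nonempty := by
    have := mem_closure_iff.1 (show ξ ∈ closure ((fun x => xiB X x) '' X) from hξΩ)
      U hUopen hξU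
    exact this
  obtain ⟨η, hηU, x, hx, rfl⟩ : ∃ η ∈ U, ∃ x ∈ X, xiB X x = η := by
    obtain ⟨η, hηU, hηim⟩ := hne
    exact ⟨η, hηU, hηim⟩
  have hfix := hUfix ⟨hηU, xiB_mem_Omega hx⟩
  obtain ⟨α, β, ρ, hab, hn, hρne, hdisj, hpα, hpβ, htα, htβ⟩ :=
    fixed_point_structure hX hx hg hfix.1 hfix.2
  obtain ⟨G, hG⟩ := exists_finset_nbhd hUopen hηU
  have key := fun h => key_false hX hx h
  choose! nf hnf using key
  have keyT : ∀ h, xiB X x h = true → ∃ a b : List Λ, h = wd a * (wd b)⁻¹ ∧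
      FreeGroup.norm h = a.length + b.length ∧ Pref a x ∧
      tail x a.length ∈ follower X a ∩ follower X b := by
    intro h hh
    obtain ⟨a, b, h1, h2, h3, h4⟩ := xiB_eq_true.1 hh
    exact ⟨a, b, h1, h2, h3, h4⟩
  choose! af bf hfw hfn hfp hft using keyT
  set K := G.sup FreeGroup.norm with hKdef
  set B1 := G.sup nf with hB1def
  set N := K + B1 + 1 with hNdef
  have hρpos : 0 < ρ.length := List.length_pos_iff.2 hρne
  set Mf := α.length + N * ρ.length with hMfdef
  have hNle : N ≤ N * ρ.length := Nat.le_mul_of_pos_right _ hρpos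
  have hMfK : K ≤ Mf := by omega
  have hMfB : B1 ≤ Mf := by omega
  have hαMf : α.length ≤ Mf := by omega
  have htMf : tail x Mf = perInf ρ := by
    rw [hMfdef, ← tail_tail, htα, tail_perInf_mul]
  set P := wrd x Mf with hPdef
  have hPlen : P.length = Mf := wrd_length x Mf
  have hPpref : Pref P x := pref_wrd x Mf
  have hTLx : ∀ m, m ≤ Mf → tail x m = cat (P.drop m) (perInf ρ) := by
    intro m hm
    rw [← htMf, ← hPlen]
    exact tail_eq_cat_drop hPpref (by rw [hPlen]; exact hm)
  set Bs : List (List Λ) := P :: (G.toList.flatMap fun h =>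
    if xiB X x h = true then
      [af h ++ P.drop (af h).length, bf h ++ P.drop (af h).length] else []) with hBsdef
  have hafK : ∀ h ∈ G, xiB X x h = true → (af h).length ≤ Mf := by
    intro h hh ht
    have h1 : FreeGroup.norm h ≤ K := Finset.le_sup (f := FreeGroup.norm) hh
    have h2 := hfn h ht
    omega
  have hfolBs : ∀ c ∈ Bs, perInf ρ ∈ follower X c := by
    intro c hc
    have hperX : perInf ρ ∈ X := by rw [← htα]; exact tail_mem hX hx _
    rw [hBsdef, List.mem_cons] at hc
    rcases hc with rfl | hc
    · refine ⟨hperX, ?_⟩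
      have e : cat P (perInf ρ) = cat (wrd x Mf) (tail x Mf) := by rw [hPdef, htMf]
      rw [e, cat_wrd]
      exact hx
    · rw [List.mem_flatMap] at hc
      obtain ⟨h, hhG, hch⟩ := hc
      rw [Finset.mem_toList] at hhG
      by_cases htr : xiB X x h = true
      · rw [if_pos htr] at hch
        have hm := hafK h hhG htr
        simp only [List.mem_cons, List.mem_singleton] at hch
        rcases hch with rfl | rfl | hfalse
        · refine ⟨hperX, ?_⟩
          rw [cat_append, ← hTLx _ hm]
          rw [cat_pref (hfp h htr)]
          exact hx
        · refine ⟨hperX, ?_⟩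
          rw [cat_append, ← hTLx _ hm]
          exact (hft h htr).2.2
        · exact absurd hfalse (List.not_mem_nil)
      · rw [if_neg htr] at hch
        exact absurd hch (List.not_mem_nil)
  obtain ⟨z, hzX, hzne, hzfol⟩ := RHS Bs ρ hρne
    (by rw [← htα]; exact tail_mem hX hx _) hfolBs
  set x' := cat P z with hx'def
  have hx'X : x' ∈ X := (hzfol P (by rw [hBsdef]; exact List.mem_cons_self)).2
  have hagree : ∀ i < Mf, x' i = x i := by
    intro i hi
    show cat P z i = x i
    rw [cat_lt P z (by rw [hPlen]; exact hi)]
    exact (hPpref i (by rw [hPlen]; exact hi)).symm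
  have hTLx' : ∀ m, m ≤ Mf → tail x' m = cat (P.drop m) z := by
    intro m hm
    have h2 : tail x' m = cat (P.drop m) (tail x' P.length) :=
      tail_eq_cat_drop (pref_cat P z) (le_trans hm hPlen.ge)
    rw [h2]
    exact congrArg (cat (P.drop m)) (tail_cat P z)
  have hGagree : ∀ h ∈ G, xiB X x' h = xiB X x h := by
    intro h hh
    cases hxh : xiB X x h with
    | false =>
      apply hnf h hxh x' hx'X
      intro i hi
      apply hagree
      have : nf h ≤ B1 := Finset.le_sup (f := nf) hh
      omega
    | true =>
      apply xiB_eq_true.2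
      have hm := hafK h hh hxh
      refine ⟨af h, bf h, hfw h hxh, hfn h hxh, ?_, ?_, ?_⟩
      · exact pref_of_agree (hfp h hxh) hm hagree
      · refine ⟨tail_mem hX hx'X _, ?_⟩
        rw [hTLx' _ hm, ← cat_append]
        exact (hzfol _ (by
          rw [hBsdef]
          apply List.mem_cons_of_mem
          rw [List.mem_flatMap]
          exact ⟨h, Finset.mem_toList.2 hh, by rw [if_pos hxh]; simp⟩)).2
      · refine ⟨tail_mem hX hx'X _, ?_⟩
        rw [hTLx' _ hm, ← cat_append]
        exact (hzfol _ (by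
          rw [hBsdef]
          apply List.mem_cons_of_mem
          rw [List.mem_flatMap]
          exact ⟨h, Finset.mem_toList.2 hh, by rw [if_pos hxh]; simp⟩)).2
  have hη'U : xiB X x' ∈ U := hG _ hGagree
  have hfix' := hUfix ⟨hη'U, xiB_mem_Omega hx'X⟩
  obtain ⟨α', β', ρ', hab', hn', hρne', hdisj', hpα', hpβ', htα', htβ'⟩ :=
    fixed_point_structure hX hx'X hg hfix'.1 hfix'.2
  obtain ⟨hαe, hβe⟩ := decomp_unique hab hn hab' hn'
  subst hαe
  subst hβe
  have hρ'pos : 0 < ρ'.length := List.length_pos_iff.2 hρne'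
  have hρe : ρ' = ρ := by
    rcases hdisj with h1 | h1 <;> rcases hdisj' with h2 | h2
    · rw [h1] at h2
      exact (List.append_cancel_left h2.symm)
    · exfalso
      have l1 : β.length = α.length + ρ.length := by rw [h1]; simp
      have l2 : α.length = β.length + ρ'.length := by rw [h2]; simp
      omega
    · exfalso
      have l1 : α.length = β.length + ρ.length := by rw [h1]; simp
      have l2 : β.length = α.length + ρ'.length := by rw [h2]; simp
      omega
    · rw [h1] at h2
      exact (List.append_cancel_left h2.symm)
  rw [hρe] at htα'
  have h9 : tail x' α.length = cat (P.drop α.length) z := hTLx' _ hαMf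
  have hdlen : (P.drop α.length).length = N * ρ.length := by
    rw [List.length_drop, hPlen, hMfdef]
    omega
  have h10 : z = perInf ρ := by
    have h11 := tail_cat (P.drop α.length) z
    rw [← h9] at h11
    rw [htα', hdlen, tail_perInf_mul] at h11
    exact h11.symm
  exact hzne h10


/-- the spectral partial action is topologically free iff for every finite
family of words `β₁,…,β_n` and every circuit `γ` with `γ^∞ ∈ ⋂ F_{β_i}`, the set
`⋂ F_{β_i}` contains an element other than `γ^∞`. -/
theorem topFree_iff {Λ : Type} [Fintype Λ] [Nonempty Λ] [DecidableEq Λ]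
    [TopologicalSpace Λ] [DiscreteTopology Λ]
    (X : Set (ℕ → Λ)) (hX : IsSubshift X) :
    TopFree X ↔
      ∀ (Bs : List (List Λ)) (γ : List Λ), γ ≠ [] → perInf γ ∈ X →
        (∀ β ∈ Bs, perInf γ ∈ follower X β) →
        ∃ z ∈ X, z ≠ perInf γ ∧ ∀ β ∈ Bs, z ∈ follower X β := by
  exact ⟨fun TF => forward_dir hX TF, fun RHS => backward_dir hX RHS⟩

end SubshiftPaper
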